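/- Clustering of point forces: let (u, X) ∈ V × (closure of Ω)ᴺ be a global minimizer of ℰ(v, Y) = ½a(v,v) − Σᵢ βᵢ v(Yᵢ) over V × (closure of Ω)ᴺ, with all βᵢ ≠ 0. Then there exist points X⁺, X⁻ in the closure of Ω, not both on ∂Ω, such that for every i: if βᵢ > 0 then Xᵢ equals X⁺ or both Xᵢ and X⁺ lie on ∂Ω, and if βᵢ < 0 then Xᵢ equals X⁻ or both Xᵢ and X⁻ lie on ∂Ω. -/

import Mathlib

lemma stmt14_quad {A d : ℝ} (hA : 0 ≤ A) (h : ∀ t : ℝ, 0 ≤ t * d + t ^ 2 / 2 * A) :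
    d = 0 := by
  by_contra hd
  have hA1 : 0 < A + 1 := by linarith
  have h1 := h (-d / (A + 1))
  have hd2 : 0 < d ^ 2 := by positivity
  have hne : (A + 1) ≠ 0 := ne_of_gt hA1
  field_simp at h1
  nlinarith [h1, mul_pos hd2 hA1, mul_pos (mul_pos hd2 hA1) hA1]


/-- clustering of point forces.  A global minimizer `(u,X)` of
`ℰ(v,Y) = ½a(v,v) − Σᵢ βᵢ v(Yᵢ)` over `V × (closure Ω)ᴺ` has cluster points
`X⁺, X⁻` in the closure of `Ω`, not both on `∂Ω`, such that `βᵢ > 0` implies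
`Xᵢ ≙ X⁺` and `βᵢ < 0` implies `Xᵢ ≙ X⁻`, where `x ≙ y` means `x = y` or both lie
on `∂Ω` (on which point evaluation vanishes on `V`).
`V` (Dirichlet or Navier subspace of `H²(Ω)`) is modelled abstractly via `ev`;
`hbv` records the vanishing of point evaluation on the boundary, `hint` its
nonvanishing at interior points, and `hsep` that evaluations at distinct points
(one interior) are distinct functionals. -/
theorem stmt14
    (Ω : Set (EuclideanSpace ℝ (Fin 2)))
    (hΩopen : IsOpen Ω) (hΩbdd : Bornology.IsBounded Ω)
    (hΩconv : Convex ℝ Ω) (hΩne : Ω.Nonempty)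
    {V : Type*} [NormedAddCommGroup V] [InnerProductSpace ℝ V] [CompleteSpace V]
    (ev : V →ₗ[ℝ] (EuclideanSpace ℝ (Fin 2) → ℝ))
    (hev_cont : ∀ v : V, ContinuousOn (ev v) (closure Ω))
    (hev_bdd : ∃ C : ℝ, ∀ (v : V), ∀ x ∈ closure Ω, |ev v x| ≤ C * ‖v‖)
    (hbv : ∀ x ∈ frontier Ω, ∀ v : V, ev v x = 0)
    (hint : ∀ x ∈ Ω, ∃ v : V, ev v x ≠ 0)
    (hsep : ∀ x ∈ Ω, ∀ y ∈ closure Ω, x ≠ y → ∃ v : V, ev v x ≠ ev v y)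
    (a : V →ₗ[ℝ] V →ₗ[ℝ] ℝ) (hsymm : ∀ v w, a v w = a w v)
    (γ Γ : ℝ) (hγ : 0 < γ) (hΓ : 0 < Γ)
    (hcoer : ∀ v, γ * ‖v‖ ^ 2 ≤ a v v)
    (hbound : ∀ v w, a v w ≤ Γ * ‖v‖ * ‖w‖)
    {N : ℕ} (hN : 0 < N) (β : Fin N → ℝ) (hβ : ∀ i, β i ≠ 0)
    (u : V) (X : Fin N → EuclideanSpace ℝ (Fin 2))
    (hX : ∀ i, X i ∈ closure Ω)
    (hmin : ∀ (v : V) (Y : Fin N → EuclideanSpace ℝ (Fin 2)),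
      (∀ i, Y i ∈ closure Ω) →
        (1 / 2) * a u u - ∑ i, β i * ev u (X i) ≤
          (1 / 2) * a v v - ∑ i, β i * ev v (Y i)) :
    ∃ Xp ∈ closure Ω, ∃ Xm ∈ closure Ω,
      ¬ (Xp ∈ frontier Ω ∧ Xm ∈ frontier Ω) ∧
      ∀ i, (0 < β i → (X i = Xp ∨ (X i ∈ frontier Ω ∧ Xp ∈ frontier Ω))) ∧
           (β i < 0 → (X i = Xm ∨ (X i ∈ frontier Ω ∧ Xm ∈ frontier Ω))) := by
  classical
  have hann : ∀ w : V, 0 ≤ a w w := fun w =>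
    le_trans (by positivity) (hcoer w)
  -- expansion of the quadratic form
  have hexp : ∀ (w : V) (t : ℝ),
      a (u + t • w) (u + t • w) = a u u + 2 * t * a u w + t ^ 2 * a w w := by
    intro w t
    simp only [map_add, map_smul, LinearMap.add_apply, LinearMap.smul_apply,
      smul_eq_mul]
    rw [hsymm w u]; ring
  -- expansion of evaluation
  have hevexp : ∀ (w : V) (t : ℝ) (x : EuclideanSpace ℝ (Fin 2)),
      ev (u + t • w) x = ev u x + t * ev w x := by
    intro w t x
    simp only [map_add, map_smul, Pi.add_apply, Pi.smul_apply, smul_eq_mul]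
  -- Euler-Lagrange equation
  have hEL : ∀ w : V, a u w = ∑ i, β i * ev w (X i) := by
    intro w
    have key : ∀ t : ℝ, 0 ≤ t * (a u w - ∑ i, β i * ev w (X i)) + t ^ 2 / 2 * a w w := by
      intro t
      have h := hmin (u + t • w) X hX
      rw [hexp w t] at h
      have hsum : ∑ i, β i * ev (u + t • w) (X i)
          = ∑ i, β i * ev u (X i) + t * ∑ i, β i * ev w (X i) := by
        rw [Finset.mul_sum, ← Finset.sum_add_distrib]
        refine Finset.sum_congr rfl fun i _ => ?_
        rw [hevexp]; ring
      rw [hsum] at h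
      nlinarith [h]
    have := stmt14_quad (hann w) key
    linarith
  -- difference of loads when one point is moved
  have hsum1 : ∀ (v : V) (i : Fin N) (y : EuclideanSpace ℝ (Fin 2)),
      ∑ j, β j * ev v (Function.update X i y j)
        = ∑ j, β j * ev v (X j) + β i * (ev v y - ev v (X i)) := by
    intro v i y
    have : ∑ j, β j * ev v (Function.update X i y j) - ∑ j, β j * ev v (X j)
        = β i * (ev v y - ev v (X i)) := by
      rw [← Finset.sum_sub_distrib]
      rw [Finset.sum_eq_single i]
      · rw [Function.update_self]; ring
      · intro j _ hj
        rw [Function.update_of_ne hj]; ring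
      · simp
    linarith
  have hupd : ∀ (i : Fin N) (y : EuclideanSpace ℝ (Fin 2)), y ∈ closure Ω →
      ∀ j, Function.update X i y j ∈ closure Ω := by
    intro i y hy j
    rcases eq_or_ne j i with rfl | hji
    · rwa [Function.update_self]
    · rw [Function.update_of_ne hji]; exact hX j
  -- weak inequality: X i maximizes β i * ev u over closure Ω
  have hweak : ∀ (i : Fin N), ∀ y ∈ closure Ω, β i * ev u y ≤ β i * ev u (X i) := by
    intro i y hy
    have h := hmin u (Function.update X i y) (hupd i y hy)
    rw [hsum1 u i y] at h
    nlinarith [h]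
  -- equality case: equal values force equal functionals
  have heqc : ∀ (i : Fin N), ∀ y ∈ closure Ω,
      β i * ev u y = β i * ev u (X i) → ∀ w : V, ev w y = ev w (X i) := by
    intro i y hy hyeq w
    by_contra hne
    have key : ∀ t : ℝ,
        0 ≤ t * (-(β i * (ev w y - ev w (X i)))) + t ^ 2 / 2 * a w w := by
      intro t
      have h := hmin (u + t • w) (Function.update X i y) (hupd i y hy)
      rw [hexp w t] at h
      have hsum : ∑ j, β j * ev (u + t • w) (Function.update X i y j)
          = ∑ j, β j * ev u (Function.update X i y j)
            + t * ∑ j, β j * ev w (Function.update X i y j) := by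
        rw [Finset.mul_sum, ← Finset.sum_add_distrib]
        refine Finset.sum_congr rfl fun j _ => ?_
        rw [hevexp]; ring
      rw [hsum, hsum1 u i y, hsum1 w i y] at h
      have h0 : β i * (ev u y - ev u (X i)) = 0 := by rw [mul_sub]; linarith
      rw [hEL w, h0] at h
      nlinarith [h]
    have := stmt14_quad (hann w) key
    have hc : ev w y - ev w (X i) ≠ 0 := sub_ne_zero.mpr hne
    exact (mul_ne_zero (hβ i) hc) (by linarith)
  -- membership dichotomy
  have hmem : ∀ z ∈ closure Ω, z ∈ Ω ∨ z ∈ frontier Ω := by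
    intro z hz
    rw [closure_eq_interior_union_frontier, hΩopen.interior_eq] at hz
    exact hz
  have hnotfr : ∀ z ∈ Ω, z ∉ frontier Ω := by
    intro z hz hzf
    rw [hΩopen.frontier_eq] at hzf
    exact hzf.2 hz
  -- equal functionals dichotomy
  have hcases : ∀ x ∈ closure Ω, ∀ x' ∈ closure Ω, (∀ w : V, ev w x = ev w x') →
      x = x' ∨ (x ∈ frontier Ω ∧ x' ∈ frontier Ω) := by
    intro x hx x' hx' hee
    rcases hmem x hx with hxΩ | hxf
    · left
      by_contra hne
      obtain ⟨w, hw⟩ := hsep x hxΩ x' hx' hne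
      exact hw (hee w)
    · rcases hmem x' hx' with hx'Ω | hx'f
      · left
        by_contra hne
        obtain ⟨w, hw⟩ := hsep x' hx'Ω x hx (Ne.symm hne)
        exact hw (hee w).symm
      · exact Or.inr ⟨hxf, hx'f⟩
  -- same-sign clustering
  have hC : ∀ i j : Fin N, 0 < β i * β j →
      X j = X i ∨ (X j ∈ frontier Ω ∧ X i ∈ frontier Ω) := by
    intro i j hij
    have h1 := hweak i (X j) (hX j)
    have h2 := hweak j (X i) (hX i)
    have hAB : ev u (X j) = ev u (X i) := by
      rcases (hβ i).lt_or_gt with hbi | hbi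
      · have hbj : β j < 0 := by nlinarith
        apply le_antisymm
        · nlinarith [h2]
        · nlinarith [h1]
      · have hbj : 0 < β j := by nlinarith
        apply le_antisymm
        · nlinarith [h1]
        · nlinarith [h2]
    have heq : β i * ev u (X j) = β i * ev u (X i) := by rw [hAB]
    have hee := heqc i (X j) (hX j) heq
    rcases hcases (X j) (hX j) (X i) (hX i) hee with h | h
    · exact Or.inl h
    · exact Or.inr h
  -- not all points on the frontier
  have hallf : ¬ ∀ i, X i ∈ frontier Ω := by
    intro hall
    -- u = 0
    have hu0 : u = 0 := by
      have ha0 : a u u = 0 := by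
        rw [hEL u]
        refine Finset.sum_eq_zero fun i _ => ?_
        rw [hbv (X i) (hall i) u]; ring
      have h2 := hcoer u
      have h3 : ‖u‖ ^ 2 = 0 := by
        refine le_antisymm ?_ (sq_nonneg _)
        nlinarith [h2, ha0]
      have h4 : ‖u‖ = 0 := by
        have := pow_eq_zero_iff (n := 2) (by norm_num) |>.mp h3
        exact this
      exact norm_eq_zero.mp h4
    obtain ⟨y, hy⟩ := hΩne
    have hyc : y ∈ closure Ω := subset_closure hy
    set i0 : Fin N := ⟨0, hN⟩
    have heq : β i0 * ev u y = β i0 * ev u (X i0) := by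
      rw [hu0]; simp
    have hee := heqc i0 y hyc heq
    obtain ⟨w, hw⟩ := hint y hy
    exact hw (by rw [hee w, hbv (X i0) (hall i0) w])
  push_neg at hallf
  obtain ⟨k, hk⟩ := hallf
  have hkΩ : X k ∈ Ω := (hmem (X k) (hX k)).resolve_right hk
  -- a frontier point exists
  have hfne : (frontier Ω).Nonempty := by
    rw [nonempty_frontier_iff]
    refine ⟨hΩne, fun h => ?_⟩
    rw [h] at hΩbdd
    exact NormedSpace.unbounded_univ ℝ (EuclideanSpace ℝ (Fin 2)) hΩbdd
  obtain ⟨z, hz⟩ := hfne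
  have hzc : z ∈ closure Ω := frontier_subset_closure hz
  -- choose Xp
  by_cases hp : ∃ i, 0 < β i ∧ X i ∈ Ω
  · obtain ⟨ip, hbip, hipΩ⟩ := hp
    by_cases hm : ∃ i, β i < 0 ∧ X i ∈ Ω
    · obtain ⟨im, hbim, himΩ⟩ := hm
      refine ⟨X ip, hX ip, X im, hX im, ?_, fun i => ⟨fun hbi => ?_, fun hbi => ?_⟩⟩
      · exact fun h => hnotfr (X ip) hipΩ h.1
      · exact hC ip i (mul_pos hbip hbi)
      · exact hC im i (mul_pos_of_neg_of_neg hbim hbi)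
    · push_neg at hm
      refine ⟨X ip, hX ip, z, hzc, ?_, fun i => ⟨fun hbi => ?_, fun hbi => ?_⟩⟩
      · exact fun h => hnotfr (X ip) hipΩ h.1
      · exact hC ip i (mul_pos hbip hbi)
      · have : X i ∈ frontier Ω := by
          rcases hmem (X i) (hX i) with h | h
          · exact absurd h (fun h' => absurd hbi (not_lt.mpr (le_of_lt (by
              by_contra hneg
              push_neg at hneg
              exact absurd h' (by simpa using hm i hbi)))))
          · exact h
        exact Or.inr ⟨this, hz⟩
  · push_neg at hp
    -- all positive points on frontier; k must have β k < 0
    have hbk : β k < 0 := by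
      rcases (hβ k).lt_or_gt with h | h
      · exact h
      · exact absurd hkΩ (hp k h)
    refine ⟨z, hzc, X k, hX k, ?_, fun i => ⟨fun hbi => ?_, fun hbi => ?_⟩⟩
    · exact fun h => hnotfr (X k) hkΩ h.2
    · have hif : X i ∈ frontier Ω := by
        rcases hmem (X i) (hX i) with h | h
        · exact absurd h (hp i hbi)
        · exact h
      exact Or.inr ⟨hif, hz⟩
    · exact hC k i (mul_pos_of_neg_of_neg hbk hbi)
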